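/- Let d be a positive natural number, A, B ∈ ℝ^{d×d}, S ⊆ {1,…,d}, and let v ∈ ℝ^d be a nonzero vector satisfying the cone condition ‖v_{Sᶜ}‖₁ ≤ 3‖v_S‖₁. Then vᵀAv / ‖v‖₂² ≥ vᵀBv / ‖v‖₂² − 16 |S| · ‖A − B‖_max. -/
import Mathlib


open Matrix Finset

/-- Quadratic-form perturbation bound over cone-restricted directions:
`vᵀAv/‖v‖₂² ≥ vᵀBv/‖v‖₂² − 16|S|‖A − B‖_max`. -/
theorem cone_quadratic_form_perturbation
    (d : ℕ) (hd : 0 < d)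
    (A B : Matrix (Fin d) (Fin d) ℝ)
    (S : Finset (Fin d)) (v : Fin d → ℝ) (hv : v ≠ 0)
    (hcone : (∑ j ∈ Sᶜ, |v j|) ≤ 3 * (∑ j ∈ S, |v j|)) :
    v ⬝ᵥ (B *ᵥ v) / (∑ j, (v j) ^ 2)
        - 16 * S.card * (⨆ i : Fin d, ⨆ j : Fin d, |A i j - B i j|)
      ≤ v ⬝ᵥ (A *ᵥ v) / (∑ j, (v j) ^ 2) := by
  classical
  set Q : ℝ := ∑ j, (v j) ^ 2 with hQdef
  have hQ : 0 < Q := by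
    obtain ⟨i, hi⟩ : ∃ i, v i ≠ 0 := Function.ne_iff.mp hv
    exact Finset.sum_pos' (fun j _ => sq_nonneg _)
      ⟨i, Finset.mem_univ i, by positivity⟩
  set M : ℝ := ⨆ i : Fin d, ⨆ j : Fin d, |A i j - B i j| with hMdef
  haveI : Nonempty (Fin d) := ⟨⟨0, hd⟩⟩
  have hMle : ∀ i j : Fin d, |A i j - B i j| ≤ M := by
    intro i j
    calc |A i j - B i j| ≤ ⨆ j : Fin d, |A i j - B i j| :=
          le_ciSup (f := fun j => |A i j - B i j|)
            (Set.Finite.bddAbove (Set.finite_range _)) j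
      _ ≤ M := le_ciSup (f := fun i => ⨆ j : Fin d, |A i j - B i j|)
          (Set.Finite.bddAbove (Set.finite_range _)) i
  have hM0 : 0 ≤ M := le_trans (abs_nonneg _) (hMle (Classical.arbitrary _) (Classical.arbitrary _))
  set L : ℝ := ∑ j, |v j| with hLdef
  have hL4 : L ≤ 4 * ∑ j ∈ S, |v j| := by
    have := Finset.sum_add_sum_compl S (fun j => |v j|)
    rw [hLdef, ← this]
    linarith
  have hS2 : (∑ j ∈ S, |v j|) ^ 2 ≤ S.card * Q := by
    calc (∑ j ∈ S, |v j|) ^ 2 ≤ S.card * ∑ j ∈ S, |v j| ^ 2 :=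
          sq_sum_le_card_mul_sum_sq
      _ ≤ S.card * Q := by
          have h1 : ∑ j ∈ S, |v j| ^ 2 ≤ Q := by
            rw [hQdef]
            calc ∑ j ∈ S, |v j| ^ 2 = ∑ j ∈ S, v j ^ 2 := by simp [sq_abs]
              _ ≤ ∑ j, v j ^ 2 := Finset.sum_le_sum_of_subset_of_nonneg
                  (Finset.subset_univ S) (fun j _ _ => sq_nonneg _)
          exact mul_le_mul_of_nonneg_left h1 (Nat.cast_nonneg _)
  have hLnn : 0 ≤ L := Finset.sum_nonneg fun j _ => abs_nonneg _
  have hL2 : L ^ 2 ≤ 16 * S.card * Q := by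
    calc L ^ 2 ≤ (4 * ∑ j ∈ S, |v j|) ^ 2 := by
          apply pow_le_pow_left₀ hLnn hL4
      _ = 16 * (∑ j ∈ S, |v j|) ^ 2 := by ring
      _ ≤ 16 * (S.card * Q) := by linarith
      _ = 16 * S.card * Q := by ring
  have hkey : v ⬝ᵥ (B *ᵥ v) - v ⬝ᵥ (A *ᵥ v) ≤ M * L ^ 2 := by
    have heq : v ⬝ᵥ (B *ᵥ v) - v ⬝ᵥ (A *ᵥ v)
        = ∑ i, ∑ j, v i * (B i j - A i j) * v j := by
      simp [dotProduct, mulVec, Finset.mul_sum, ← Finset.sum_sub_distrib]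
      congr 1; ext i; congr 1; ext j; ring
    rw [heq]
    calc ∑ i, ∑ j, v i * (B i j - A i j) * v j
        ≤ ∑ i, ∑ j, |v i| * M * |v j| := by
          apply Finset.sum_le_sum; intro i _
          apply Finset.sum_le_sum; intro j _
          calc v i * (B i j - A i j) * v j ≤ |v i * (B i j - A i j) * v j| := le_abs_self _
            _ = |v i| * |B i j - A i j| * |v j| := by rw [abs_mul, abs_mul]
            _ ≤ |v i| * M * |v j| := by
                have := hMle i j
                rw [abs_sub_comm] at this
                have h1 : |v i| * |B i j - A i j| ≤ |v i| * M :=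
                  mul_le_mul_of_nonneg_left this (abs_nonneg _)
                exact mul_le_mul_of_nonneg_right h1 (abs_nonneg _)
      _ = M * L ^ 2 := by
          simp only [← Finset.sum_mul, ← Finset.mul_sum, hLdef]
          ring
  have h2 : v ⬝ᵥ (B *ᵥ v) - v ⬝ᵥ (A *ᵥ v) ≤ 16 * S.card * M * Q := by
    calc v ⬝ᵥ (B *ᵥ v) - v ⬝ᵥ (A *ᵥ v) ≤ M * L ^ 2 := hkey
      _ ≤ M * (16 * S.card * Q) := mul_le_mul_of_nonneg_left hL2 hM0
      _ = 16 * S.card * M * Q := by ring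
  have h3 : (v ⬝ᵥ (B *ᵥ v) - v ⬝ᵥ (A *ᵥ v)) / Q ≤ 16 * S.card * M :=
    (div_le_iff₀ hQ).mpr h2
  rw [sub_div] at h3
  linarith
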